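/- Over F₂, let M be the (regions × crossings) incidence matrix of a reduced knot diagram D. Then the rank of M is exactly c(D), i.e., the region incidence vectors span F₂^{c(D)}. -/

import Mathlib

/-!
STATEMENT 12: over `F₂`, the rows of the region-crossing incidence matrix of
a reduced knot diagram with `c(D)` crossings span all of `F₂^{c(D)}`, i.e. the
matrix has rank exactly `c(D)`.

A knot diagram is modelled faithfully by a rotation system.  A *dart* is a
pair `(v, i)`: the `i`-th edge-end (in counterclockwise cyclic order) at the
crossing `v`.  The fixed-point-free involution `α` pairs the two ends of each
edge of the underlying 4-valent graph; `opp` sends a dart to the opposite dart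
at the same crossing (continuing along the same strand).  The diagram is a
*knot* diagram when the relation generated by `α` and `opp` relates all darts
(the underlying curve has a single component), and it is *planar* (lies on
`S²`) when Euler's formula holds: the face permutation `α.trans rot` has
exactly `n + 2` orbits.  Regions are the orbits of the face permutation, and
`M R c` is the parity of the number of corners (darts) of the region `R` at
the crossing `c`.  Region crossing changes at a finite set `P` of regions add
`∑_{R ∈ P} M R ·` to the over/under vector in `F₂ = ZMod 2`.
-/

open Equiv

abbrev Dart (n : ℕ) := Fin n × Fin 4

/-- the rotation of darts around a crossing -/
def rot (n : ℕ) : Equiv.Perm (Dart n) :=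
  (Equiv.refl (Fin n)).prodCongr (Equiv.addRight (1 : Fin 4))

/-- the opposite dart at the same crossing (same strand) -/
def opp (n : ℕ) : Equiv.Perm (Dart n) :=
  (Equiv.refl (Fin n)).prodCongr (Equiv.addRight (2 : Fin 4))

/-- the setoid whose classes are the cycles (orbits) of a permutation -/
def cycleSetoid {β : Type*} (f : Equiv.Perm β) : Setoid β :=
  ⟨f.SameCycle, ⟨fun _ => Equiv.Perm.SameCycle.refl f _,
    Equiv.Perm.SameCycle.symm, Equiv.Perm.SameCycle.trans⟩⟩

/-- a knot diagram with `n` crossings, encoded by a rotation system -/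
structure KnotDiagram (n : ℕ) where
  pos : 0 < n
  /-- the fixed-point-free involution pairing the two ends of each edge -/
  α : Equiv.Perm (Dart n)
  invol : ∀ d, α (α d) = d
  no_fix : ∀ d, α d ≠ d
  /-- the underlying curve has a single component (it is a knot diagram) -/
  oneComponent : ∀ d d' : Dart n,
    Relation.EqvGen (fun x y => y = α x ∨ y = opp n x) d d'
  /-- planarity via Euler's formula: the face permutation has `n + 2` orbits -/
  planar : Nat.card (Quotient (cycleSetoid (α.trans (rot n)))) = n + 2

/-- the regions (faces) of a knot diagram -/
def KnotDiagram.Region {n : ℕ} (D : KnotDiagram n) : Type :=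
  Quotient (cycleSetoid (D.α.trans (rot n)))

/-- the region in whose boundary a given dart (corner) lies -/
def KnotDiagram.regionOf {n : ℕ} (D : KnotDiagram n) (d : Dart n) : D.Region :=
  Quotient.mk _ d

/-- the region-crossing incidence matrix over `F₂`: the parity of the number
of corners of region `R` at crossing `c` -/
noncomputable def KnotDiagram.M {n : ℕ} (D : KnotDiagram n) (R : D.Region) (c : Fin n) :
    ZMod 2 :=
  (Nat.card {i : Fin 4 // D.regionOf (c, i) = R} : ZMod 2)

/-- the effect of region crossing changes at a set `P` of regions on the
crossing `c` -/
noncomputable def KnotDiagram.effect {n : ℕ} (D : KnotDiagram n) (P : Finset D.Region)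
    (c : Fin n) : ZMod 2 :=
  ∑ R ∈ P, D.M R c

noncomputable instance {n : ℕ} (D : KnotDiagram n) : Fintype D.Region :=
  @Fintype.ofFinite _ (Quotient.finite _)

/-- `D` is reduced: at every crossing the two pairs of opposite corners lie in
distinct regions. -/
def KnotDiagram.Reduced {n : ℕ} (D : KnotDiagram n) : Prop :=
  ∀ c : Fin n, D.regionOf (c, 0) ≠ D.regionOf (c, 2) ∧
    D.regionOf (c, 1) ≠ D.regionOf (c, 3)

-- ============ auxiliary development ============
namespace RCC

abbrev F := ZMod 2

lemma z2a : ∀ a : F, a + a = 0 := by decide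
lemma z2b : ∀ a b c : F, a + b + (b + c) = a + c := by decide
lemma z2d : ∀ a b c d : F, (a + b) + (b + c) + (c + d) + (d + a) = 0 := by decide
lemma z2c : ∀ a b c e : F, a + b = c + e → a + c = b + e := by decide

variable {n : ℕ} (D : KnotDiagram n)

lemma rot_apply (v : Fin n) (i : Fin 4) : rot n (v, i) = (v, i + 1) := rfl
lemma opp_apply (v : Fin n) (i : Fin 4) : opp n (v, i) = (v, i + 2) := rfl
lemma opp_fst (d : Dart n) : (opp n d).1 = d.1 := rfl

lemma alpha_sq : D.α * D.α = 1 :=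
  Equiv.ext fun d => by simp [Equiv.Perm.mul_apply, D.invol d]

lemma sameCycle_alpha_iff {a b : Dart n} : D.α.SameCycle a b ↔ b = a ∨ b = D.α a := by
  constructor
  · rintro ⟨k, hk⟩
    obtain ⟨m, rfl | rfl⟩ := Int.even_or_odd' k
    · left
      rw [zpow_mul] at hk
      simp only [show D.α ^ (2:ℤ) = 1 by rw [show (2:ℤ) = ((2:ℕ):ℤ) by norm_num, zpow_natCast, pow_two, alpha_sq]] at hk
      simpa using hk.symm
    · right
      rw [zpow_add, zpow_one, zpow_mul] at hk
      simp only [show D.α ^ (2:ℤ) = 1 by rw [show (2:ℤ) = ((2:ℕ):ℤ) by norm_num, zpow_natCast, pow_two, alpha_sq]] at hk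
      simpa using hk.symm
  · rintro (rfl | rfl)
    · exact ⟨0, rfl⟩
    · exact ⟨1, by simp⟩

/-- the edges of the diagram: orbits of the involution `α` -/
def KD.Edge : Type := Quotient (cycleSetoid D.α)

noncomputable instance : Fintype (KD.Edge D) := @Fintype.ofFinite _ (Quotient.finite _)
noncomputable instance : DecidableEq (KD.Edge D) := Classical.decEq _
noncomputable instance : DecidableEq D.Region := Classical.decEq _

def KD.edgeOf (d : Dart n) : KD.Edge D := Quotient.mk _ d

lemma edgeOf_eq_iff {d d' : Dart n} :
    KD.edgeOf D d' = KD.edgeOf D d ↔ d = d' ∨ d = D.α d' := by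
  constructor
  · intro h
    exact (sameCycle_alpha_iff D).1 (Quotient.exact h)
  · intro h
    exact Quotient.sound ((sameCycle_alpha_iff D).2 h)

lemma edgeOf_alpha (d : Dart n) : KD.edgeOf D (D.α d) = KD.edgeOf D d :=
  (edgeOf_eq_iff D).2 (Or.inr (D.invol d).symm)

lemma regionOf_alpha (d : Dart n) : D.regionOf (D.α d) = D.regionOf (rot n d) := by
  apply Quotient.sound
  exact ⟨1, by simp [Equiv.Perm.SameCycle, D.invol, Equiv.trans_apply]⟩

end RCC

namespace RCC
variable {n : ℕ} (D : KnotDiagram n)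

/-- `∂₁` : edge chains to vertex chains -/
def bd1 : (KD.Edge D → F) →ₗ[F] (Fin n → F) where
  toFun z := fun v => ∑ i : Fin 4, z (KD.edgeOf D (v, i))
  map_add' z w := by funext v; simp [Finset.sum_add_distrib]
  map_smul' c z := by funext v; simp [Finset.mul_sum]

/-- `∂₂` : region chains to edge chains -/
def bd2 : (D.Region → F) →ₗ[F] (KD.Edge D → F) where
  toFun y := Quotient.lift (fun d => y (D.regionOf d) + y (D.regionOf (D.α d)))
    (by
      intro a b hab
      rcases (sameCycle_alpha_iff D).1 hab with rfl | rfl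
      · rfl
      · simp only [D.invol]
        exact add_comm _ _)
  map_add' y w := by
    funext e
    induction e using Quotient.ind
    simp only [Quotient.lift_mk, Pi.add_apply]
    rename_i a
    show _ = (y (D.regionOf a) + y (D.regionOf (D.α a))) + (w (D.regionOf a) + w (D.regionOf (D.α a)))
    ring
  map_smul' c y := by
    funext e
    induction e using Quotient.ind
    simp only [Quotient.lift_mk, Pi.smul_apply, smul_eq_mul, RingHom.id_apply]
    rename_i a
    show _ = c * (y (D.regionOf a) + y (D.regionOf (D.α a)))
    ring

lemma bd2_apply (y : D.Region → F) (d : Dart n) :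
    bd2 D y (KD.edgeOf D d) = y (D.regionOf d) + y (D.regionOf (D.α d)) := rfl

/-- the half-strand evaluation map -/
def Umap : (KD.Edge D → F) →ₗ[F] (Fin n → F) where
  toFun z := fun v => z (KD.edgeOf D (v, 1)) + z (KD.edgeOf D (v, 3))
  map_add' z w := by funext v; simp; ring
  map_smul' c z := by funext v; simp; ring

/-- the total effect map -/
def Tmap : (D.Region → F) →ₗ[F] (Fin n → F) where
  toFun y := fun v => ∑ i : Fin 4, y (D.regionOf (v, i))
  map_add' y w := by funext v; simp [Finset.sum_add_distrib]
  map_smul' c y := by funext v; simp [Finset.mul_sum]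

lemma U_comp_bd2 : (Umap D) ∘ₗ (bd2 D) = Tmap D := by
  apply LinearMap.ext
  intro y
  funext v
  have h1 : D.regionOf (D.α (v, 1)) = D.regionOf (v, 2) := by
    rw [regionOf_alpha, rot_apply, show ((1:Fin 4)+1 = 2) from rfl]
  have h3 : D.regionOf (D.α (v, 3)) = D.regionOf (v, 0) := by
    rw [regionOf_alpha, rot_apply, show ((3:Fin 4)+1 = 0) from rfl]
  simp only [LinearMap.comp_apply, Umap, Tmap, LinearMap.coe_mk, AddHom.coe_mk,
    bd2_apply, h1, h3, Fin.sum_univ_four]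
  ring

lemma bd1_comp_bd2 : (bd1 D) ∘ₗ (bd2 D) = 0 := by
  apply LinearMap.ext
  intro y
  funext v
  have key : ∀ i : Fin 4, D.regionOf (D.α (v, i)) = D.regionOf (v, i + 1) := by
    intro i; rw [regionOf_alpha, rot_apply]
  simp only [LinearMap.comp_apply, bd1, LinearMap.coe_mk, AddHom.coe_mk, bd2_apply, key,
    LinearMap.zero_apply, Pi.zero_apply, Fin.sum_univ_four]
  have e1 : (0:Fin 4) + 1 = 1 := by decide
  have e2 : (1:Fin 4) + 1 = 2 := by decide
  have e3 : (2:Fin 4) + 1 = 3 := by decide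
  have e4 : (3:Fin 4) + 1 = 0 := by decide
  rw [e1, e2, e3, e4]
  exact z2d _ _ _ _

end RCC

namespace RCC
variable {n : ℕ} (D : KnotDiagram n)

lemma z2e : ∀ a b : F, a + b = 0 → b = a := by decide

lemma const_of_invariant {β : Type*} (g : Dart n → β)
    (h1 : ∀ d, g (D.α d) = g d) (h2 : ∀ d, g (opp n d) = g d) (d d' : Dart n) :
    g d = g d' := by
  have h := D.oneComponent d d'
  induction h with
  | rel a b hab => rcases hab with rfl | rfl
                   · exact (h1 a).symm
                   · exact (h2 a).symm
  | refl a => rfl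
  | symm a b _ ih => exact ih.symm
  | trans a b c _ _ ih1 ih2 => exact ih1.trans ih2

lemma opp_eq_rot_rot (d : Dart n) : opp n d = rot n (rot n d) := by
  rcases d with ⟨v, i⟩
  simp only [rot_apply, opp_apply, Prod.mk.injEq, true_and]
  exact (congrArg (i + ·) (by decide : (2:Fin 4) = 1 + 1)).trans (add_assoc i 1 1).symm

lemma ker_bd2_le :
    LinearMap.ker (bd2 D) ≤ Submodule.span F {(fun _ => 1 : D.Region → F)} := by
  intro y hy
  have hy' : ∀ d : Dart n, y (D.regionOf (D.α d)) = y (D.regionOf d) := by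
    intro d
    have h := congrFun (LinearMap.mem_ker.mp hy) (KD.edgeOf D d)
    rw [bd2_apply] at h
    exact z2e _ _ h
  have hrot : ∀ d, y (D.regionOf (rot n d)) = y (D.regionOf d) := by
    intro d; rw [← regionOf_alpha]; exact hy' d
  have hopp : ∀ d, y (D.regionOf (opp n d)) = y (D.regionOf d) := by
    intro d; rw [opp_eq_rot_rot, hrot, hrot]
  have hconst := const_of_invariant D (fun d => y (D.regionOf d)) hy' hopp
  set d0 : Dart n := (⟨0, D.pos⟩, 0) with hd0
  have hy2 : y = (y (D.regionOf d0)) • (fun _ => (1:F)) := by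
    funext R
    obtain ⟨d, rfl⟩ := Quotient.exists_rep R
    have : y (D.regionOf d) = y (D.regionOf d0) := hconst d d0
    show y (D.regionOf d) = y (D.regionOf d0) * 1
    rw [mul_one]; exact this
  rw [hy2]
  exact Submodule.smul_mem _ _ (Submodule.mem_span_singleton_self _)

lemma edgeOf_eq_iff' {x d : Dart n} :
    KD.edgeOf D x = KD.edgeOf D d ↔ x = d ∨ x = D.α d := by
  rw [edgeOf_eq_iff]
  constructor
  · rintro (rfl | h)
    · exact Or.inl rfl
    · right; rw [h, D.invol]
  · rintro (rfl | rfl)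
    · exact Or.inl rfl
    · right; rw [D.invol]

lemma ite_edge (d x : Dart n) :
    (if KD.edgeOf D x = KD.edgeOf D d then (1:F) else 0)
      = (if x = d then (1:F) else 0) + (if x = D.α d then (1:F) else 0) := by
  by_cases h1 : x = d
  · subst h1
    rw [if_pos rfl, if_pos rfl, if_neg (fun h => D.no_fix x h.symm), add_zero]
  · by_cases h2 : x = D.α d
    · subst h2
      rw [if_pos (edgeOf_alpha D d), if_neg h1, if_pos rfl, zero_add]
    · rw [if_neg h1, if_neg h2, if_neg, add_zero]
      rw [edgeOf_eq_iff' D]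
      tauto

lemma ite_dart_apply (x : Dart n) (v : Fin n) (j : Fin 4) :
    (if (v, j) = x then (1:F) else 0)
      = (if x.2 = j then Pi.single x.1 (1:F) else (0 : Fin n → F)) v := by
  rcases x with ⟨u, i⟩
  by_cases h : i = j
  · subst h
    simp [Prod.mk.injEq, and_true, Pi.single_apply]
  · rw [if_neg h, if_neg (fun hh : (v, j) = (u, i) => h (congrArg Prod.snd hh).symm)]
    simp

lemma sum_ite_dart_fst (x : Dart n) (v : Fin n) :
    (∑ j : Fin 4, if (v, j) = x then (1:F) else 0) = if v = x.1 then 1 else 0 := by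
  rcases x with ⟨u, i⟩
  by_cases h : v = u
  · subst h
    rw [if_pos rfl]
    have : ∀ j : Fin 4, (if (v, j) = (v, i) then (1:F) else 0) = if j = i then 1 else 0 := by
      intro j; simp [Prod.ext_iff]
    rw [Finset.sum_congr rfl fun j _ => this j, Finset.sum_ite_eq' Finset.univ i fun _ => (1:F)]
    simp
  · rw [if_neg h]
    apply Finset.sum_eq_zero
    intro j _
    rw [if_neg (fun hh : (v, j) = (u, i) => h (congrArg Prod.fst hh))]

/-- the characteristic function at the strand positions 1 and 3 -/
noncomputable def sig (x : Dart n) : Fin n → F :=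
  (if x.2 = 1 then Pi.single x.1 (1:F) else 0) + (if x.2 = 3 then Pi.single x.1 (1:F) else 0)

lemma U_single (d : Dart n) :
    Umap D (Pi.single (KD.edgeOf D d) (1:F)) = sig d + sig (D.α d) := by
  funext v
  simp only [Umap, LinearMap.coe_mk, AddHom.coe_mk, Pi.single_apply]
  rw [ite_edge D d (v,1), ite_edge D d (v,3)]
  simp only [ite_dart_apply, sig, Pi.add_apply]
  ring

lemma bd1_single (d : Dart n) :
    bd1 D (Pi.single (KD.edgeOf D d) (1:F))
      = Pi.single d.1 (1:F) + Pi.single (D.α d).1 (1:F) := by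
  funext v
  simp only [bd1, LinearMap.coe_mk, AddHom.coe_mk, Pi.single_apply]
  have : ∀ j : Fin 4, (if KD.edgeOf D (v, j) = KD.edgeOf D d then (1:F) else 0)
      = (if (v, j) = d then (1:F) else 0) + (if (v, j) = D.α d then (1:F) else 0) :=
    fun j => ite_edge D d (v, j)
  rw [Finset.sum_congr rfl fun j _ => this j, Finset.sum_add_distrib,
    sum_ite_dart_fst, sum_ite_dart_fst]
  simp [Pi.single_apply]

lemma card_edge : Fintype.card (KD.Edge D) * 2 = 4 * n := by
  classical
  have hfib : ∀ e : KD.Edge D,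
      (Finset.univ.filter fun a : Dart n => KD.edgeOf D a = e).card = 2 := by
    intro e
    induction e using Quotient.ind with
    | _ d =>
      have he : (Finset.univ.filter fun a : Dart n => KD.edgeOf D a = KD.edgeOf D d)
          = {d, D.α d} := by
        ext x
        simp [edgeOf_eq_iff' D]
      have : (Quotient.mk (cycleSetoid D.α) d) = KD.edgeOf D d := rfl
      rw [this, he, Finset.card_insert_of_notMem
        (by simp only [Finset.mem_singleton]; exact fun h => D.no_fix d h.symm),
        Finset.card_singleton]
  have hcount := Finset.card_eq_sum_card_fiberwise
    (f := fun d : Dart n => KD.edgeOf D d) (s := Finset.univ) (t := Finset.univ)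
    (fun x _ => Finset.mem_univ _)
  simp only [hfib, Finset.card_univ, Finset.sum_const, smul_eq_mul] at hcount
  have hdart : Fintype.card (Dart n) = 4 * n := by
    simp [Fintype.card_prod, mul_comm]
  rw [hdart] at hcount
  exact hcount.symm

end RCC

namespace RCC
open Module Submodule LinearMap
variable {n : ℕ} (D : KnotDiagram n)

lemma single_diff_mem (v v' : Fin n) :
    Pi.single v (1:F) + Pi.single v' (1:F) ∈ LinearMap.range (bd1 D) := by
  have key : ∀ d d' : Dart n, Relation.EqvGen (fun x y => y = D.α x ∨ y = opp n x) d d' →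
      Pi.single d.1 (1:F) + Pi.single d'.1 (1:F) ∈ LinearMap.range (bd1 D) := by
    intro d d' h
    induction h with
    | rel a b hab =>
      rcases hab with rfl | rfl
      · exact ⟨Pi.single (KD.edgeOf D a) (1:F), bd1_single D a⟩
      · have hfst : (opp n a).1 = a.1 := rfl
        rw [hfst]
        have h0 : (Pi.single a.1 1 : Fin n → F) + Pi.single a.1 1 = 0 := by
          funext u; simp only [Pi.add_apply, Pi.zero_apply]; exact z2a _
        rw [h0]; exact Submodule.zero_mem _
    | refl a =>
        have h0 : (Pi.single a.1 1 : Fin n → F) + Pi.single a.1 1 = 0 := by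
          funext u; simp only [Pi.add_apply, Pi.zero_apply]; exact z2a _
        rw [h0]; exact Submodule.zero_mem _
    | symm a b _ ih => rw [add_comm]; exact ih
    | trans a b c _ _ ih1 ih2 =>
      have hmem := Submodule.add_mem _ ih1 ih2
      have heq : ((Pi.single a.1 1 : Fin n → F) + Pi.single b.1 1)
            + ((Pi.single b.1 1 : Fin n → F) + Pi.single c.1 1)
          = (Pi.single a.1 1 : Fin n → F) + Pi.single c.1 1 := by
        funext u; simp only [Pi.add_apply]; exact z2b _ _ _
      rwa [heq] at hmem
  have := key (v, 0) (v', 0) (D.oneComponent _ _)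
  simpa using this

lemma range_bd1_sup :
    (LinearMap.range (bd1 D)) ⊔
      Submodule.span F {Pi.single (⟨0, D.pos⟩ : Fin n) (1:F)} = ⊤ := by
  rw [eq_top_iff]
  intro y _
  rw [← Finset.univ_sum_single y]
  apply Submodule.sum_mem
  intro v _
  have hy : Pi.single v (y v) = y v • (Pi.single v 1 : Fin n → F) := by
    funext u; by_cases h : u = v <;> simp [Pi.single_apply, h]
  rw [hy]
  apply Submodule.smul_mem
  have h1 : (Pi.single v 1 : Fin n → F)
      = ((Pi.single v 1 : Fin n → F) + Pi.single (⟨0, D.pos⟩ : Fin n) 1)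
        + Pi.single (⟨0, D.pos⟩ : Fin n) 1 := by
    funext u
    simp only [Pi.add_apply]
    rw [add_assoc, z2a, add_zero]
  rw [h1]
  exact Submodule.add_mem _
    (Submodule.mem_sup_left (single_diff_mem D v _))
    (Submodule.mem_sup_right (Submodule.mem_span_singleton_self _))

lemma ker_bd1_eq_range_bd2 :
    LinearMap.ker (bd1 D) = LinearMap.range (bd2 D) := by
  have hle : LinearMap.range (bd2 D) ≤ LinearMap.ker (bd1 D) := by
    rintro z ⟨y, rfl⟩
    rw [LinearMap.mem_ker, ← LinearMap.comp_apply, bd1_comp_bd2]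
    rfl
  have hC1 : Module.finrank F (KD.Edge D → F) = 2 * n := by
    rw [Module.finrank_fintype_fun_eq_card]
    have := card_edge D
    omega
  have hC2 : Module.finrank F (D.Region → F) = n + 2 := by
    rw [Module.finrank_fintype_fun_eq_card]
    have hp : Nat.card D.Region = n + 2 := D.planar
    rwa [Nat.card_eq_fintype_card] at hp
  have hrn1 := LinearMap.finrank_range_add_finrank_ker (bd1 D)
  have hrn2 := LinearMap.finrank_range_add_finrank_ker (bd2 D)
  rw [hC1] at hrn1
  rw [hC2] at hrn2
  have hk2 : Module.finrank F (LinearMap.ker (bd2 D)) ≤ 1 := by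
    refine le_trans (Submodule.finrank_mono (ker_bd2_le D)) ?_
    by_cases h : (fun _ => (1:F) : D.Region → F) = 0
    · rw [h, Submodule.span_zero_singleton]
      simp
    · rw [finrank_span_singleton h]
  have hr1 : n ≤ Module.finrank F (LinearMap.range (bd1 D)) + 1 := by
    have hx : (Pi.single (⟨0, D.pos⟩ : Fin n) 1 : Fin n → F) ≠ 0 := by
      intro h
      have := congrFun h ⟨0, D.pos⟩
      simp [Pi.single_apply] at this
    have hs := finrank_span_singleton (K := F) hx
    have h1 := Submodule.finrank_sup_add_finrank_inf_eq (LinearMap.range (bd1 D))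
      (Submodule.span F {Pi.single (⟨0, D.pos⟩ : Fin n) (1:F)})
    rw [range_bd1_sup D, hs] at h1
    have htop : Module.finrank F (⊤ : Submodule F (Fin n → F)) = n := by
      rw [finrank_top, Module.finrank_fintype_fun_eq_card, Fintype.card_fin]
    rw [htop] at h1
    omega
  exact (Submodule.eq_of_le_of_finrank_le hle (by omega)).symm

end RCC

namespace RCC
open Module Submodule LinearMap
variable {n : ℕ} (D : KnotDiagram n)

lemma z2f : ∀ a b : F, b = a + 0 + b → a = 0 := by decide
lemma z2g : ∀ a b : F, 0 + 0 + b = a + 0 + b → a = 0 := by decide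

lemma exists_factor {M N : Type*} [AddCommGroup M] [AddCommGroup N] [Module F M] [Module F N]
    (g : M →ₗ[F] N) (f : M →ₗ[F] F) (h : LinearMap.ker g ≤ LinearMap.ker f) :
    ∃ s : N →ₗ[F] F, f = s ∘ₗ g := by
  set fbar := (LinearMap.ker g).liftQ f h with hfbar
  obtain ⟨s, hs⟩ := LinearMap.exists_extend
    (fbar ∘ₗ g.quotKerEquivRange.symm.toLinearMap)
  refine ⟨s, ?_⟩
  ext x
  have e1 : g.quotKerEquivRange (Submodule.Quotient.mk x)
      = ⟨g x, LinearMap.mem_range_self g x⟩ :=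
    Subtype.ext (LinearMap.quotKerEquivRange_apply_mk g x)
  have e2 : s (g x)
      = (s ∘ₗ (LinearMap.range g).subtype) ⟨g x, LinearMap.mem_range_self g x⟩ := rfl
  calc f x = fbar (Submodule.Quotient.mk x) := (Submodule.liftQ_apply _ f x).symm
    _ = fbar (g.quotKerEquivRange.symm ⟨g x, LinearMap.mem_range_self g x⟩) := by
        rw [← e1, LinearEquiv.symm_apply_apply]
    _ = (fbar ∘ₗ g.quotKerEquivRange.symm.toLinearMap) ⟨g x, _⟩ := rfl
    _ = (s ∘ₗ (LinearMap.range g).subtype) ⟨g x, _⟩ := by rw [hs]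
    _ = (s ∘ₗ g) x := by rw [← e2]; rfl

lemma single_smul_eq (v : Fin n) (c : F) :
    Pi.single v c = c • (Pi.single v 1 : Fin n → F) := by
  funext u
  by_cases h : u = v <;> simp [Pi.single_apply, h]

lemma map_U_ker_bd1 : Submodule.map (Umap D) (LinearMap.ker (bd1 D)) = ⊤ := by
  by_contra hne
  have hlt : Submodule.map (Umap D) (LinearMap.ker (bd1 D)) < ⊤ := lt_top_iff_ne_top.mpr hne
  obtain ⟨x0, -, hx0⟩ := SetLike.exists_of_lt hlt
  obtain ⟨f, hfx0, hmap⟩ := Submodule.exists_dual_map_eq_bot_of_notMem hx0 inferInstance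
  have hker : LinearMap.ker (bd1 D) ≤ LinearMap.ker (f ∘ₗ Umap D) := by
    intro y hy
    rw [LinearMap.mem_ker, LinearMap.comp_apply]
    have hmem : Umap D y ∈ Submodule.map (Umap D) (LinearMap.ker (bd1 D)) :=
      ⟨y, hy, rfl⟩
    have : f (Umap D y) ∈ Submodule.map f (Submodule.map (Umap D) (LinearMap.ker (bd1 D))) :=
      Submodule.mem_map_of_mem hmem
    rw [hmap] at this
    simpa using this
  obtain ⟨s, hs⟩ := exists_factor (bd1 D) (f ∘ₗ Umap D) hker
  set xh : Fin n → F := fun v => f (Pi.single v 1) with hxh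
  set sh : Fin n → F := fun v => s (Pi.single v 1) with hsh
  set tval : Dart n → F :=
    fun x => (if x.2 = 1 then xh x.1 else 0) + (if x.2 = 3 then xh x.1 else 0) with htval
  have hfsig : ∀ x : Dart n, f (sig x) = tval x := by
    intro x
    rw [sig, map_add, apply_ite f, apply_ite f, map_zero]
  have hmain : ∀ d : Dart n, tval d + tval (D.α d) = sh d.1 + sh (D.α d).1 := by
    intro d
    have h1 := LinearMap.congr_fun hs (Pi.single (KD.edgeOf D d) (1:F))
    rw [LinearMap.comp_apply, LinearMap.comp_apply, U_single, bd1_single, map_add,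
      hfsig, hfsig, map_add] at h1
    exact h1
  set h : Dart n → F := fun d => tval d + sh d.1 with hh
  have hinv1 : ∀ d, h (D.α d) = h d := by
    intro d
    exact (z2c _ _ _ _ (hmain d)).symm
  have hinv2 : ∀ d, h (opp n d) = h d := by
    intro d
    have hcond : ∀ j : Fin 4, ((j + 2 = 1) = (j = 3)) ∧ ((j + 2 = 3) = (j = 1)) := by decide
    rcases d with ⟨v, i⟩
    simp only [hh, htval, opp_apply]
    simp only [(hcond i).1, (hcond i).2]
    ring
  have hconst := const_of_invariant D h hinv1 hinv2
  have hzero : ∀ v : Fin n, xh v = 0 := by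
    intro v
    have h01 := hconst (v, 0) (v, 1)
    simp only [hh, htval] at h01
    rw [if_pos trivial, if_neg (show ¬(1:Fin 4) = 3 by decide)] at h01
    exact z2g _ _ h01
  have hf : f = 0 := by
    apply LinearMap.ext
    intro y
    rw [← Finset.univ_sum_single y, map_sum]
    rw [LinearMap.zero_apply]
    apply Finset.sum_eq_zero
    intro v _
    rw [single_smul_eq, map_smul, show f (Pi.single v 1) = 0 from hzero v, smul_zero]
  exact hfx0 (by rw [hf]; rfl)

lemma M_expand (R : D.Region) (v : Fin n) :
    D.M R v = ∑ i : Fin 4, if D.regionOf (v, i) = R then (1:F) else 0 := by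
  classical
  rw [KnotDiagram.M, Nat.card_eq_fintype_card, Fintype.card_subtype, Finset.card_filter]
  push_cast
  rfl

lemma T_expand (y : D.Region → F) :
    Tmap D y = ∑ R : D.Region, y R • (fun c => D.M R c) := by
  funext v
  rw [Finset.sum_apply]
  simp only [Pi.smul_apply, smul_eq_mul, M_expand]
  simp only [Finset.mul_sum, mul_ite, mul_one, mul_zero]
  rw [Finset.sum_comm]
  simp only [Tmap, LinearMap.coe_mk, AddHom.coe_mk]
  apply Finset.sum_congr rfl
  intro i _
  have : ∀ R : D.Region, (if D.regionOf (v, i) = R then y R else 0)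
      = if D.regionOf (v, i) = R then y (D.regionOf (v, i)) else 0 := by
    intro R; split_ifs with hR
    · rw [hR]
    · rfl
  rw [Finset.sum_congr rfl fun R _ => this R, Finset.sum_ite_eq Finset.univ (D.regionOf (v, i)) fun _ => y (D.regionOf (v, i))]
  simp

end RCC

/-- The incidence rows of a reduced knot diagram span `F₂^{c(D)}`; in
particular the incidence matrix has rank exactly `c(D)`. -/
theorem incidence_matrix_rank_eq_crossing_number
    {n : ℕ} (D : KnotDiagram n) (hred : D.Reduced) :
    Submodule.span (ZMod 2)
        (Set.range fun R : D.Region => fun c : Fin n => D.M R c) = ⊤ ∧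
      Module.finrank (ZMod 2)
        ↥(Submodule.span (ZMod 2)
          (Set.range fun R : D.Region => fun c : Fin n => D.M R c)) = n := by
  classical
  have hrange : LinearMap.range (RCC.Tmap D) = ⊤ := by
    rw [← RCC.U_comp_bd2 D, LinearMap.range_comp, ← RCC.ker_bd1_eq_range_bd2 D,
      RCC.map_U_ker_bd1 D]
  have hspan : Submodule.span (ZMod 2)
      (Set.range fun R : D.Region => fun c : Fin n => D.M R c) = ⊤ := by
    rw [eq_top_iff]
    intro x _
    have hx : x ∈ LinearMap.range (RCC.Tmap D) := hrange.symm ▸ Submodule.mem_top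
    obtain ⟨y, rfl⟩ := hx
    rw [RCC.T_expand D y]
    exact Submodule.sum_mem _ fun R _ => Submodule.smul_mem _ _
      (Submodule.subset_span ⟨R, rfl⟩)
  refine ⟨hspan, ?_⟩
  rw [hspan, finrank_top, Module.finrank_fintype_fun_eq_card, Fintype.card_fin]
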